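/- For the exponential sampling series of F⁰_π, F⁰_π(x) = (2/π²) ∑_{k∈ℤ} (sin²(kπ/2)/k²) sinc(log x − k) (k = 0 term interpreted as (π²/4) sinc(log x)), the truncation error satisfies, for N ≥ 2 max{1, |log x|}: |(T_{π,N} F⁰_π)(x)| := |(2/π²) ∑_{|k| ≥ N+1} (sin²(kπ/2)/k²) sinc(log x − k)| ≤ (4/π³) N^{-1}. -/

import Mathlib

open Real

/-- `sinc u = sin(πu)/(πu)`, `sinc 0 = 1`. -/
noncomputable def sinc (u : ℝ) : ℝ :=
  if u = 0 then 1 else Real.sin (π * u) / (π * u)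

lemma tele_hasSum (N : ℕ) (hN : 1 ≤ N) :
    HasSum (fun n : ℕ => (1:ℝ)/((N:ℝ)+n) - 1/((N:ℝ)+n+1)) (1/(N:ℝ)) := by
  have hNpos : (0:ℝ) < N := by exact_mod_cast hN
  have hpos : ∀ n : ℕ, (0:ℝ) < (N:ℝ) + n := fun n => by positivity
  have hnonneg : ∀ n : ℕ, (0:ℝ) ≤ 1/((N:ℝ)+n) - 1/((N:ℝ)+n+1) := by
    intro n
    have h1 : (0:ℝ) < (N:ℝ) + n := hpos n
    have := one_div_le_one_div_of_le h1 (by linarith : (N:ℝ)+n ≤ (N:ℝ)+n+1)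
    linarith
  rw [hasSum_iff_tendsto_nat_of_nonneg hnonneg]
  have hsum : ∀ m : ℕ, ∑ i ∈ Finset.range m, ((1:ℝ)/((N:ℝ)+i) - 1/((N:ℝ)+i+1))
      = 1/(N:ℝ) - 1/((N:ℝ)+m) := by
    intro m
    have h := Finset.sum_range_sub' (f := fun i : ℕ => (1:ℝ)/((N:ℝ)+i)) m
    have h2 : (1:ℝ)/((N:ℝ)+((0:ℕ):ℝ)) = 1/(N:ℝ) := by norm_num
    rw [h2] at h
    rw [← h]
    exact Finset.sum_congr rfl (fun i _ => by push_cast; ring)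
  simp_rw [hsum]
  have hmono : Filter.Tendsto (fun m : ℕ => (N:ℝ) + m) Filter.atTop Filter.atTop :=
    Filter.tendsto_atTop_add_const_left _ _ tendsto_natCast_atTop_atTop
  have hlim : Filter.Tendsto (fun m : ℕ => 1/((N:ℝ)+m)) Filter.atTop (nhds 0) := by
    simp_rw [one_div]
    exact tendsto_inv_atTop_zero.comp hmono
  have hfin := Filter.Tendsto.sub (tendsto_const_nhds (x := 1/(N:ℝ))) hlim
  simpa using hfin

set_option maxHeartbeats 1000000 in
/-- Truncation-error estimate for the exponential sampling series of
`F⁰_π(x) = ½ sinc²(½ log x)`: for `N ≥ 2 max{1, |log x|}` the tail is at most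
`(4/π³) N⁻¹`. -/
theorem truncation_error_Fpi (x : ℝ) (hx : 0 < x) (N : ℕ)
    (hN : 2 * max 1 |Real.log x| ≤ (N : ℝ)) :
    |2 / π ^ 2 * ∑' k : {k : ℤ // (N : ℤ) + 1 ≤ |k|},
        Real.sin ((k : ℤ) * π / 2) ^ 2 / ((k : ℤ) : ℝ) ^ 2 *
          _root_.sinc (Real.log x - ((k : ℤ) : ℝ))|
      ≤ 4 / π ^ 3 * ((N : ℝ))⁻¹ := by
  have hπ : (0:ℝ) < π := Real.pi_pos
  set u := Real.log x with hu_def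
  have hmax1 : (1:ℝ) ≤ max 1 |u| := le_max_left _ _
  have hmaxu : |u| ≤ max 1 |u| := le_max_right _ _
  have hN2 : (2:ℝ) ≤ (N:ℝ) := by linarith
  have hu2 : |u| ≤ (N:ℝ)/2 := by linarith
  have hNn : 1 ≤ N := by
    have h1 : (1:ℝ) ≤ (N:ℝ) := by linarith
    exact_mod_cast h1
  have hNne : ((N:ℝ)) ≠ 0 := by positivity
  set s : Set ℤ := {k : ℤ | (N : ℤ) + 1 ≤ |k|} with hs_def
  set a : ℤ → ℝ := fun k => 1/(|(k:ℝ)| - 1) - 1/|(k:ℝ)| with ha_def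
  set t : ℤ → ℝ := fun k =>
    Real.sin ((k:ℝ) * π / 2) ^ 2 / ((k:ℝ)) ^ 2 * _root_.sinc (u - (k:ℝ)) with ht_def
  -- sum of `a` over the tail
  have hkey := tele_hasSum N hNn
  have h1 : HasSum (fun n : ℕ => s.indicator a (n : ℤ)) (1/(N:ℝ)) := by
    have h0 : ∀ n : ℕ, s.indicator a (((n + (N+1) : ℕ)) : ℤ)
        = 1/((N:ℝ)+n) - 1/((N:ℝ)+n+1) := by
      intro n
      rw [Set.indicator_of_mem]
      · simp only [ha_def]
        rw [show |(((n + (N+1) : ℕ) : ℤ) : ℝ)| = (N:ℝ) + n + 1 by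
          rw [abs_of_nonneg (by positivity)]; push_cast; ring]
        ring_nf
      · show (N:ℤ) + 1 ≤ |((n + (N+1) : ℕ) : ℤ)|
        rw [Int.abs_natCast]; push_cast; omega
    have hshift : HasSum (fun n : ℕ => s.indicator a (((n + (N+1) : ℕ)) : ℤ)) (1/(N:ℝ)) := by
      rw [funext h0]; exact hkey
    have hmain := (hasSum_nat_add_iff (f := fun n : ℕ => s.indicator a (n : ℤ)) (N+1)).mp
      (by exact_mod_cast hshift)
    rw [Finset.sum_eq_zero] at hmain
    · simpa using hmain
    · intro i hi
      apply Set.indicator_of_notMem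
      show ¬ ((N:ℤ) + 1 ≤ |((i:ℕ) : ℤ)|)
      rw [Int.abs_natCast]
      have := Finset.mem_range.mp hi
      push_cast; omega
  have h2 : HasSum (fun n : ℕ => s.indicator a (-((n:ℤ) + 1))) (1/(N:ℝ)) := by
    have h0 : ∀ n : ℕ, s.indicator a (-((((n + N : ℕ)):ℤ) + 1))
        = 1/((N:ℝ)+n) - 1/((N:ℝ)+n+1) := by
      intro n
      rw [Set.indicator_of_mem]
      · simp only [ha_def]
        push_cast
        rw [abs_neg, abs_of_nonneg (by positivity)]
        ring_nf
      · show (N:ℤ) + 1 ≤ |(-((((n + N : ℕ)):ℤ) + 1))|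
        rw [abs_neg, abs_of_nonneg (by positivity)]
        push_cast; omega
    have hshift : HasSum (fun n : ℕ => s.indicator a (-((((n + N : ℕ)):ℤ) + 1))) (1/(N:ℝ)) := by
      rw [funext h0]; exact hkey
    have hmain := (hasSum_nat_add_iff (f := fun n : ℕ => s.indicator a (-((n:ℤ) + 1))) N).mp
      (by exact_mod_cast hshift)
    rw [Finset.sum_eq_zero] at hmain
    · simpa using hmain
    · intro i hi
      apply Set.indicator_of_notMem
      show ¬ ((N:ℤ) + 1 ≤ |(-((i:ℤ) + 1))|)
      rw [abs_neg, abs_of_nonneg (by positivity)]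
      have := Finset.mem_range.mp hi
      push_cast; omega
  have hind : HasSum (s.indicator a) (2/(N:ℝ)) := by
    have h12 := h1.of_nat_of_neg_add_one h2
    convert h12 using 1; ring
  have hsub : HasSum (fun k : {k : ℤ // (N : ℤ) + 1 ≤ |k|} => a (k:ℤ)) (2/(N:ℝ)) :=
    hasSum_subtype_iff_indicator.mpr hind
  -- per-term bound
  have hterm : ∀ k : ℤ, (N:ℤ) + 1 ≤ |k| → |t k| ≤ (1/π) * a k := by
    intro k hk
    have hm : (N:ℝ) + 1 ≤ |(k:ℝ)| := by
      rw [← Int.cast_abs]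
      exact_mod_cast hk
    have hm3 : (3:ℝ) ≤ |(k:ℝ)| := by linarith
    have hd : |(k:ℝ)|/2 ≤ |u - (k:ℝ)| := by
      have h := abs_sub_abs_le_abs_sub (k:ℝ) u
      rw [abs_sub_comm] at h
      linarith
    have hne : u - (k:ℝ) ≠ 0 := by
      intro h
      rw [h, abs_zero] at hd
      linarith
    have hdpos : (0:ℝ) < |u - (k:ℝ)| := by linarith
    have hsinc : |_root_.sinc (u - (k:ℝ))| ≤ 1/(π * (|(k:ℝ)|/2)) := by
      rw [show _root_.sinc (u - (k:ℝ)) = Real.sin (π * (u - (k:ℝ))) / (π * (u - (k:ℝ))) from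
        if_neg hne]
      rw [abs_div, abs_mul, abs_of_pos hπ]
      refine div_le_div₀ zero_le_one (Real.abs_sin_le_one _) (by positivity) ?_
      exact mul_le_mul_of_nonneg_left hd hπ.le
    have habs : |t k| = Real.sin ((k:ℝ) * π / 2) ^ 2 / (|(k:ℝ)|) ^ 2 * |_root_.sinc (u - (k:ℝ))| := by
      simp only [ht_def]
      rw [abs_mul, abs_div, abs_of_nonneg (sq_nonneg _), ← pow_abs]
    have hak : (1/π) * a k = 1/(π * (|(k:ℝ)| - 1) * |(k:ℝ)|) := by
      simp only [ha_def]
      have h1 : |(k:ℝ)| - 1 ≠ 0 := by linarith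
      have h2 : |(k:ℝ)| ≠ 0 := by linarith
      field_simp
      ring
    rw [habs, hak]
    calc Real.sin ((k:ℝ) * π / 2) ^ 2 / (|(k:ℝ)|) ^ 2 * |_root_.sinc (u - (k:ℝ))|
        ≤ 1 / (|(k:ℝ)|) ^ 2 * (1/(π * (|(k:ℝ)|/2))) := by
          exact mul_le_mul (div_le_div₀ zero_le_one (Real.sin_sq_le_one _) (by positivity) le_rfl)
            hsinc (abs_nonneg _) (by positivity)
      _ ≤ 1/(π * (|(k:ℝ)| - 1) * |(k:ℝ)|) := by
          have hkpos : (0:ℝ) < |(k:ℝ)| := by linarith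
          have hk1 : (0:ℝ) < |(k:ℝ)| - 1 := by linarith
          rw [div_mul_div_comm, one_mul]
          apply one_div_le_one_div_of_le
          · positivity
          · nlinarith [mul_pos hπ hkpos,
              mul_nonneg (mul_nonneg hπ.le hkpos.le) (sq_nonneg (|(k:ℝ)| - 1))]
  -- assemble
  have habs_le : ∀ k : {k : ℤ // (N : ℤ) + 1 ≤ |k|}, |t (k:ℤ)| ≤ (1/π) * a (k:ℤ) :=
    fun k => hterm k k.2
  have hsummable_a : Summable (fun k : {k : ℤ // (N : ℤ) + 1 ≤ |k|} => (1/π) * a (k:ℤ)) :=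
    (hsub.summable).mul_left _
  have hsum_abs : Summable (fun k : {k : ℤ // (N : ℤ) + 1 ≤ |k|} => |t (k:ℤ)|) :=
    Summable.of_nonneg_of_le (fun k => abs_nonneg _) habs_le hsummable_a
  have hsumt : Summable (fun k : {k : ℤ // (N : ℤ) + 1 ≤ |k|} => t (k:ℤ)) :=
    hsum_abs.of_abs
  have hb1 : |∑' k : {k : ℤ // (N : ℤ) + 1 ≤ |k|}, t (k:ℤ)|
      ≤ ∑' k : {k : ℤ // (N : ℤ) + 1 ≤ |k|}, |t (k:ℤ)| := by
    simpa [Real.norm_eq_abs] using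
      norm_tsum_le_tsum_norm (f := fun k : {k : ℤ // (N : ℤ) + 1 ≤ |k|} => t (k:ℤ))
        (by simpa [Real.norm_eq_abs] using hsum_abs)
  have hb2 : ∑' k : {k : ℤ // (N : ℤ) + 1 ≤ |k|}, |t (k:ℤ)|
      ≤ ∑' k : {k : ℤ // (N : ℤ) + 1 ≤ |k|}, (1/π) * a (k:ℤ) :=
    Summable.tsum_le_tsum habs_le hsum_abs hsummable_a
  have hb3 : ∑' k : {k : ℤ // (N : ℤ) + 1 ≤ |k|}, (1/π) * a (k:ℤ) = (1/π) * (2/(N:ℝ)) := by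
    rw [tsum_mul_left, hsub.tsum_eq]
  have hS : |∑' k : {k : ℤ // (N : ℤ) + 1 ≤ |k|}, t (k:ℤ)| ≤ (1/π) * (2/(N:ℝ)) := by
    calc _ ≤ _ := hb1
      _ ≤ _ := hb2
      _ = _ := hb3
  show |2 / π ^ 2 * ∑' k : {k : ℤ // (N : ℤ) + 1 ≤ |k|}, t (k:ℤ)| ≤ 4 / π ^ 3 * ((N : ℝ))⁻¹
  rw [abs_mul, abs_of_pos (by positivity : (0:ℝ) < 2 / π ^ 2)]
  calc 2 / π ^ 2 * |∑' k : {k : ℤ // (N : ℤ) + 1 ≤ |k|}, t (k:ℤ)|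
      ≤ 2 / π ^ 2 * ((1/π) * (2/(N:ℝ))) := by
        exact mul_le_mul_of_nonneg_left hS (by positivity)
    _ = 4 / π ^ 3 * ((N : ℝ))⁻¹ := by
        field_simp
        ring
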